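/- Let μ > 0 and R > 0, and let r : [0,∞) → ℝ be differentiable with r'(t) = μ(1 − r(t)²/R²)·r(t) for all t ≥ 0 and r(0) > 0. Then r(t) > 0 for all t ≥ 0 and r(t) → R as t → ∞. -/

import Mathlib

open Filter Set Topology

/-- Barrier lemma: if the vector field is positive on the level `c` and the
solution starts above `c`, it stays above `c`. -/
lemma radial_barrier (r f : ℝ → ℝ) (c : ℝ)
    (hode : ∀ t ∈ Set.Ici (0:ℝ), HasDerivWithinAt r (f t) (Set.Ici (0:ℝ)) t)
    (hfc : ∀ t, 0 ≤ t → r t = c → 0 < f t)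
    (h0 : c < r 0) : ∀ t, 0 ≤ t → c < r t := by
  have hcont : ContinuousOn r (Set.Ici 0) := fun t ht => (hode t ht).continuousWithinAt
  by_contra h
  push_neg at h
  obtain ⟨t0, ht0, htc⟩ := h
  set S : Set ℝ := Set.Ici 0 ∩ r ⁻¹' Set.Iic c with hS
  have hSne : S.Nonempty := ⟨t0, ht0, htc⟩
  have hSbdd : BddBelow S := ⟨0, fun x hx => hx.1⟩
  have hSclosed : IsClosed S := by
    exact ContinuousOn.preimage_isClosed_of_isClosed hcont isClosed_Ici isClosed_Iic
  set t1 := sInf S with ht1def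
  have ht1S : t1 ∈ S := hSclosed.csInf_mem hSne hSbdd
  have ht1pos : 0 < t1 := by
    rcases lt_or_eq_of_le (mem_Ici.mp ht1S.1) with h | h
    · exact h
    · exfalso; rw [← h] at ht1S; exact absurd ht1S.2 (not_le.mpr h0)
  have hbefore : ∀ t, 0 ≤ t → t < t1 → c < r t := by
    intro t ht htlt
    by_contra hle
    exact absurd (csInf_le hSbdd ⟨ht, not_lt.mp hle⟩) (not_le.mpr htlt)
  -- r t1 = c
  have hrt1 : r t1 = c := by
    refine le_antisymm ht1S.2 ?_
    have htend : Tendsto r (𝓝[Set.Ico 0 t1] t1) (𝓝 (r t1)) :=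
      (hcont t1 ht1S.1).mono_left (nhdsWithin_mono _ (fun x hx => hx.1))
    have hne : (𝓝[Set.Ico 0 t1] t1).NeBot := by
      apply mem_closure_iff_nhdsWithin_neBot.mp
      rw [closure_Ico (ne_of_lt ht1pos)]
      exact ⟨ht1S.1, le_refl _⟩
    exact ge_of_tendsto htend (eventually_nhdsWithin_of_forall
      (fun x hx => (hbefore x hx.1 hx.2).le))
  have hd : HasDerivAt r (f t1) t1 :=
    (hode t1 ht1S.1).hasDerivAt (Ici_mem_nhds ht1pos)
  have hfpos : 0 < f t1 := hfc t1 ht1S.1 hrt1 -- note ht1S.1 : 0 ≤ t1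
  have hslope : Tendsto (slope r t1) (𝓝[≠] t1) (𝓝 (f t1)) :=
    hasDerivAt_iff_tendsto_slope.mp hd
  have hev : ∀ᶠ x in 𝓝[<] t1, 0 < slope r t1 x :=
    (hslope.mono_left (nhdsWithin_mono _ (fun x hx => ne_of_lt hx))).eventually
      (lt_mem_nhds hfpos)
  have hev2 : ∀ᶠ x in 𝓝[<] t1, x ∈ Set.Ioo 0 t1 :=
    Ioo_mem_nhdsLT_of_mem ⟨ht1pos, le_refl _⟩
  obtain ⟨x, hx1, hx2⟩ := (hev.and hev2).exists
  have hxlt : x < t1 := hx2.2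
  have : r x - r t1 < 0 := by
    have h' := hx1
    rw [slope_def_field] at h'
    rcases div_pos_iff.mp h' with ⟨_, h2⟩ | ⟨h1, _⟩
    · linarith
    · linarith
  have hcx : c < r x := hbefore x hx2.1.le hx2.2
  rw [hrt1] at this
  linarith

theorem radial_ode_converges_to_R
    (μ R : ℝ) (hμ : 0 < μ) (hR : 0 < R)
    (r : ℝ → ℝ)
    (hode : ∀ t ∈ Set.Ici (0 : ℝ),
      HasDerivWithinAt r (μ * (1 - (r t) ^ 2 / R ^ 2) * r t) (Set.Ici (0 : ℝ)) t)
    (h0 : 0 < r 0) :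
    (∀ t : ℝ, 0 ≤ t → 0 < r t) ∧
    Tendsto r atTop (nhds R) := by
  have hcont : ContinuousOn r (Set.Ici 0) := fun t ht => (hode t ht).continuousWithinAt
  set c := min (r 0) R / 2 with hc
  have hc0 : 0 < c := by
    have : 0 < min (r 0) R := lt_min h0 hR
    positivity
  have hcR : c < R := by
    have : min (r 0) R ≤ R := min_le_right _ _
    simp only [hc]; linarith
  have hcr0 : c < r 0 := by
    have : min (r 0) R ≤ r 0 := min_le_left _ _
    simp only [hc]; linarith
  set C := max (r 0) R + 1 with hC
  have hRC : R < C := by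
    have : R ≤ max (r 0) R := le_max_right _ _
    simp only [hC]; linarith
  have hr0C : r 0 < C := by
    have : r 0 ≤ max (r 0) R := le_max_left _ _
    simp only [hC]; linarith
  -- lower barrier
  have hlow : ∀ t, 0 ≤ t → c < r t := by
    apply radial_barrier r _ c hode _ hcr0
    intro t ht hrt
    rw [hrt]
    have h1 : 0 < 1 - c ^ 2 / R ^ 2 := by
      have : c ^ 2 < R ^ 2 := by nlinarith
      have : c ^ 2 / R ^ 2 < 1 := by
        rw [div_lt_one (by positivity)]; exact this
      linarith
    positivity
  -- upper barrier
  have hup : ∀ t, 0 ≤ t → r t < C := by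
    have := radial_barrier (fun t => -r t)
      (fun t => -(μ * (1 - (r t) ^ 2 / R ^ 2) * r t)) (-C)
      (fun t ht => (hode t ht).neg)
      (fun t ht hrt => ?_) (by simpa using hr0C)
    · intro t ht
      have := this t ht
      simpa using this
    · simp only [neg_eq_iff_eq_neg, neg_neg] at hrt
      have hrtC : r t = C := by linarith [hrt]
      simp only [hrtC]
      have h1 : 1 - C ^ 2 / R ^ 2 < 0 := by
        have : R ^ 2 < C ^ 2 := by nlinarith
        have : 1 < C ^ 2 / R ^ 2 := by
          rw [lt_div_iff₀ (by positivity)]; linarith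
        linarith
      have hCpos : 0 < C := lt_trans hR hRC
      have : μ * (1 - C ^ 2 / R ^ 2) * C < 0 := by
        apply mul_neg_of_neg_of_pos _ hCpos
        exact mul_neg_of_pos_of_neg hμ h1
      linarith
  refine ⟨fun t ht => lt_trans hc0 (hlow t ht), ?_⟩
  -- Lyapunov function
  set k := 4 * μ * c ^ 2 / R ^ 2 with hk
  have hk0 : 0 < k := by positivity
  set W : ℝ → ℝ := fun t => (r t ^ 2 - R ^ 2) ^ 2 * Real.exp (k * t) with hW
  have hWanti : AntitoneOn W (Set.Ici 0) := by
    apply antitoneOn_of_deriv_nonpos (convex_Ici 0)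
    · exact (((hcont.pow 2).sub continuousOn_const).pow 2).mul
        (Real.continuous_exp.comp (continuous_const.mul continuous_id)).continuousOn
    · intro x hx
      rw [interior_Ici] at hx
      have hd : HasDerivAt r (μ * (1 - (r x) ^ 2 / R ^ 2) * r x) x :=
        (hode x (mem_Ici.mpr (le_of_lt hx))).hasDerivAt (Ici_mem_nhds hx)
      have h1 : HasDerivAt (fun t => (r t ^ 2 - R ^ 2) ^ 2)
          (2 * (r x ^ 2 - R ^ 2) ^ 1 * (2 * r x ^ 1 * (μ * (1 - (r x) ^ 2 / R ^ 2) * r x))) x :=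
        ((hd.pow 2).sub_const _).pow 2
      have h2 : HasDerivAt (fun t => Real.exp (k * t)) (Real.exp (k * x) * (k * 1)) x :=
        ((hasDerivAt_id x).const_mul k).exp
      exact (h1.mul h2).differentiableAt.differentiableWithinAt
    · intro x hx
      rw [interior_Ici] at hx
      have hd : HasDerivAt r (μ * (1 - (r x) ^ 2 / R ^ 2) * r x) x :=
        (hode x (mem_Ici.mpr (le_of_lt hx))).hasDerivAt (Ici_mem_nhds hx)
      have h1 : HasDerivAt (fun t => (r t ^ 2 - R ^ 2) ^ 2)
          (2 * (r x ^ 2 - R ^ 2) ^ 1 * (2 * r x ^ 1 * (μ * (1 - (r x) ^ 2 / R ^ 2) * r x))) x :=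
        ((hd.pow 2).sub_const _).pow 2
      have h2 : HasDerivAt (fun t => Real.exp (k * t)) (Real.exp (k * x) * (k * 1)) x :=
        ((hasDerivAt_id x).const_mul k).exp
      have hWd : HasDerivAt W _ x := (h1.mul h2)
      rw [hWd.deriv]
      set a := r x with ha
      have hca : c ≤ a := (hlow x hx.le).le
      have hkey : k ≤ 4 * μ * a ^ 2 / R ^ 2 := by
        rw [hk]
        have hsq : c ^ 2 ≤ a ^ 2 := by nlinarith
        have h4 : 4 * μ * c ^ 2 ≤ 4 * μ * a ^ 2 := by nlinarith
        exact div_le_div_of_nonneg_right h4 (by positivity)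
      have he : (0:ℝ) < Real.exp (k * x) := Real.exp_pos _
      have heq : 2 * (a ^ 2 - R ^ 2) ^ 1 * (2 * a ^ 1 * (μ * (1 - a ^ 2 / R ^ 2) * a)) *
            Real.exp (k * x) + (a ^ 2 - R ^ 2) ^ 2 * (Real.exp (k * x) * (k * 1)) =
          ((a ^ 2 - R ^ 2) ^ 2 * Real.exp (k * x)) * (k - 4 * μ * a ^ 2 / R ^ 2) := by
        field_simp
        ring
      rw [heq]
      exact mul_nonpos_of_nonneg_of_nonpos (by positivity) (by linarith)
  -- decay bound
  have hbound : ∀ t, 0 ≤ t → |r t - R| ≤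
      Real.sqrt ((r 0 ^ 2 - R ^ 2) ^ 2) * Real.exp (-(k / 2) * t) / R := by
    intro t ht
    have hVt : (r t ^ 2 - R ^ 2) ^ 2 * Real.exp (k * t) ≤ (r 0 ^ 2 - R ^ 2) ^ 2 := by
      have := hWanti self_mem_Ici (mem_Ici.mpr ht) ht
      simpa [hW] using this
    have he : (0:ℝ) < Real.exp (k * t) := Real.exp_pos _
    have h1 : (r t ^ 2 - R ^ 2) ^ 2 ≤ (r 0 ^ 2 - R ^ 2) ^ 2 * Real.exp (-(k * t)) := by
      rw [Real.exp_neg, ← div_eq_mul_inv, le_div_iff₀ he]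
      exact hVt
    have he2 : Real.exp (-(k * t)) = Real.exp (-(k / 2) * t) ^ 2 := by
      rw [sq, ← Real.exp_add]
      congr 1; ring
    have hsq : |r t ^ 2 - R ^ 2| ≤ Real.sqrt ((r 0 ^ 2 - R ^ 2) ^ 2) * Real.exp (-(k / 2) * t) := by
      rw [← Real.sqrt_sq_eq_abs]
      have h2 := Real.sqrt_le_sqrt h1
      rwa [Real.sqrt_mul (sq_nonneg _), he2, Real.sqrt_sq (Real.exp_pos _).le] at h2
    have hrt : 0 < r t := lt_trans hc0 (hlow t ht)
    have hplus : 0 < r t + R := by linarith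
    have habs : |r t - R| * R ≤ |r t ^ 2 - R ^ 2| := by
      have heq2 : |r t ^ 2 - R ^ 2| = |r t - R| * (r t + R) := by
        rw [← abs_of_pos hplus, ← abs_mul]
        congr 1; ring
      rw [heq2]
      exact mul_le_mul_of_nonneg_left (by linarith) (abs_nonneg _)
    rw [le_div_iff₀ hR]
    linarith
  have htend0 : Tendsto (fun t => Real.sqrt ((r 0 ^ 2 - R ^ 2) ^ 2) *
      Real.exp (-(k / 2) * t) / R) atTop (𝓝 0) := by
    have h1 : Tendsto (fun t : ℝ => (k / 2) * t) atTop atTop :=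
      Tendsto.const_mul_atTop (by positivity) tendsto_id
    have h2 : Tendsto (fun t : ℝ => Real.exp (-(k / 2) * t)) atTop (𝓝 0) := by
      have h3 := Real.tendsto_exp_atBot.comp (tendsto_neg_atTop_atBot.comp h1)
      exact h3.congr (fun t => by simp only [Function.comp_apply, neg_mul])
    have h4 := (h2.const_mul (Real.sqrt ((r 0 ^ 2 - R ^ 2) ^ 2))).div_const R
    simpa using h4
  have habs0 : Tendsto (fun t => |r t - R|) atTop (𝓝 0) :=
    squeeze_zero' (eventually_atTop.mpr ⟨0, fun t _ => abs_nonneg _⟩)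
      (eventually_atTop.mpr ⟨0, fun t ht => hbound t ht⟩) htend0
  have hs : Tendsto (fun t => r t - R) atTop (𝓝 0) := by
    exact (tendsto_zero_iff_abs_tendsto_zero (fun t => r t - R)).mpr habs0
  have := hs.add_const R
  simpa using this
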